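/- arXiv:2401.04594 — 8 statements merged into one kernel-verified Lean document; each statement's English description precedes it below -/
import Mathlib

section
/- Soundness of the Outcome Logic proof system: for every program C and all outcome assertions φ, ψ, if the triple ⟨φ⟩C⟨ψ⟩ is derivable in the Outcome Logic proof system (Ω ⊢ ⟨φ⟩C⟨ψ⟩), then it is semantically valid (⊨ ⟨φ⟩C⟨ψ⟩). -/
open scoped Classical

universe u v

/-- A semiring that is simultaneously a complete lattice with bottom `0`, whose order
coincides with the natural (additive) order, and in which addition and multiplication
are Scott-continuous. -/
class OLSemiring (U : Type u) extends Semiring U, CompleteLattice U where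
  bot_eq_zero : (⊥ : U) = 0
  le_iff_exists_add : ∀ a b : U, a ≤ b ↔ ∃ c, a + c = b
  add_scott : ∀ (D : Set U), D.Nonempty → DirectedOn (· ≤ ·) D → ∀ y : U,
    sSup ((fun x => x + y) '' D) = sSup D + y
  mul_scott_right : ∀ (D : Set U), D.Nonempty → DirectedOn (· ≤ ·) D → ∀ y : U,
    sSup ((fun x => x * y) '' D) = sSup D * y
  mul_scott_left : ∀ (D : Set U), D.Nonempty → DirectedOn (· ≤ ·) D → ∀ y : U,
    sSup ((fun x => y * x) '' D) = y * sSup D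

variable {U : Type u} [OLSemiring U]

/-- Infinite sum: supremum over finite subfamilies of finite sums. -/
noncomputable def wsum {I : Type v} (f : I → U) : U :=
  ⨆ J : Finset I, ∑ i ∈ J, f i

/-- The unit of the weighting monad. -/
noncomputable def eta {X : Type u} (x : X) : X → U :=
  fun y => if y = x then 1 else 0

/-- Kleisli extension: `kext f m y = ∑_{x ∈ supp m} m x * f x y`. -/
noncomputable def kext {X Y : Type u} (f : X → Y → U) (m : X → U) : Y → U :=
  fun y => wsum (fun x : Function.support m => m x.1 * f x.1 y)

/-- Syntax of tests over primitive tests indexed by `TI`. -/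
inductive TestExpr (TI : Type u) : Type u where
  | prim (t : TI)
  | tt
  | ff
  | and (b₁ b₂ : TestExpr TI)
  | or (b₁ b₂ : TestExpr TI)
  | not (b : TestExpr TI)

/-- The set of states at which a test is true. -/
def testSet {St TI : Type u} (tsem : TI → Set St) : TestExpr TI → Set St
  | .prim t => tsem t
  | .tt => Set.univ
  | .ff => ∅
  | .and b₁ b₂ => testSet tsem b₁ ∩ testSet tsem b₂
  | .or b₁ b₂ => testSet tsem b₁ ∪ testSet tsem b₂
  | .not b => (testSet tsem b)ᶜ

/-- Expressions: a test or a weight. -/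
inductive Expr (U : Type u) (TI : Type u) : Type u where
  | test (b : TestExpr TI)
  | wt (u : U)

/-- Evaluation of expressions into weights. -/
noncomputable def eeval {St TI : Type u} (tsem : TI → Set St) : Expr U TI → St → U
  | .test b => fun σ => if σ ∈ testSet tsem b then 1 else 0
  | .wt u => fun _ => u

/-- Programs. -/
inductive Prog (U St TI Act : Type u) : Type u where
  | skip
  | seq (C₁ C₂ : Prog U St TI Act)
  | choice (C₁ C₂ : Prog U St TI Act)
  | assume (e : Expr U TI)
  | iter (C : Prog U St TI Act) (e e' : Expr U TI)
  | act (a : Act)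

/-- The characteristic function of iteration. -/
noncomputable def Phi {St : Type u} (w w' : St → U) (g : St → St → U)
    (f : St → St → U) : St → St → U :=
  fun σ τ => w σ * kext f (g σ) τ + w' σ * eta σ τ

/-- Denotational semantics of programs. -/
noncomputable def sem {St TI Act : Type u} (tsem : TI → Set St)
    (asem : Act → St → St → U) : Prog U St TI Act → St → St → U
  | .skip => fun σ => eta σ
  | .seq C₁ C₂ => fun σ => kext (sem tsem asem C₂) (sem tsem asem C₁ σ)
  | .choice C₁ C₂ => fun σ τ => sem tsem asem C₁ σ τ + sem tsem asem C₂ σ τ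
  | .assume e => fun σ τ => eeval tsem e σ * eta σ τ
  | .iter C e e' =>
      ⨆ n : ℕ, (Phi (eeval tsem e) (eeval tsem e') (sem tsem asem C))^[n] (fun _ _ => 0)
  | .act a => asem a

/-- Outcome assertions. -/
abbrev OA (U : Type u) (St : Type u) := Set (St → U)

/-- Binary outcome conjunction. -/
def oplus {St : Type u} (φ ψ : OA U St) : OA U St :=
  { m | ∃ m₁ ∈ φ, ∃ m₂ ∈ ψ, m = fun σ => m₁ σ + m₂ σ }

/-- Indexed outcome conjunction. -/
noncomputable def bigOplus {St T : Type u} (φ : T → OA U St) : OA U St :=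
  { m | ∃ f : T → St → U, (∀ t, f t ∈ φ t) ∧ m = fun σ => wsum (fun t => f t σ) }

/-- Right scaling of an assertion by a weight. -/
def odotR {St : Type u} (φ : OA U St) (u : U) : OA U St :=
  { m' | ∃ m ∈ φ, m' = fun σ => m σ * u }

/-- Left scaling of an assertion by a weight. -/
def odotL {St : Type u} (u : U) (φ : OA U St) : OA U St :=
  { m' | ∃ m ∈ φ, m' = fun σ => u * m σ }

/-- `φ ⊨ e = u` : the expression `e` evaluates to `u` on the support of every `m ∈ φ`. -/
def entailsEq {St TI : Type u} (tsem : TI → Set St) (φ : OA U St)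
    (e : Expr U TI) (u : U) : Prop :=
  ∀ m ∈ φ, ∀ σ, m σ ≠ 0 → eeval tsem e σ = u

/-- Semantic validity of an outcome triple. -/
def valid {St TI Act : Type u} (tsem : TI → Set St) (asem : Act → St → St → U)
    (φ : OA U St) (C : Prog U St TI Act) (ψ : OA U St) : Prop :=
  ∀ m ∈ φ, kext (sem tsem asem C) m ∈ ψ

/-- The family `ψ` of assertions converges to `ψlim`. -/
def convergesTo {St : Type u} (ψ : ℕ → OA U St) (ψlim : OA U St) : Prop :=
  ∀ ms : ℕ → St → U, (∀ n, ms n ∈ ψ n) → (fun σ => wsum (fun n => ms n σ)) ∈ ψlim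

/-- The Outcome Logic proof system (with oracle axioms for valid atomic triples). -/
inductive Deriv {St TI Act : Type u} (tsem : TI → Set St) (asem : Act → St → St → U) :
    OA U St → Prog U St TI Act → OA U St → Prop where
  | atom {φ ψ} (a : Act) :
      valid tsem asem φ (.act a) ψ → Deriv tsem asem φ (.act a) ψ
  | skip (φ) : Deriv tsem asem φ .skip φ
  | seq {φ ϑ ψ C₁ C₂} :
      Deriv tsem asem φ C₁ ϑ → Deriv tsem asem ϑ C₂ ψ →
      Deriv tsem asem φ (.seq C₁ C₂) ψ
  | plus {φ ψ₁ ψ₂ C₁ C₂} :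
      Deriv tsem asem φ C₁ ψ₁ → Deriv tsem asem φ C₂ ψ₂ →
      Deriv tsem asem φ (.choice C₁ C₂) (oplus ψ₁ ψ₂)
  | assume {φ e u} :
      entailsEq tsem φ e u → Deriv tsem asem φ (.assume e) (odotR φ u)
  | iter {C e e'} (φn ψn : ℕ → OA U St) (ψlim : OA U St) :
      convergesTo ψn ψlim →
      (∀ n, Deriv tsem asem (φn n) (.seq (.assume e) C) (φn (n + 1))) →
      (∀ n, Deriv tsem asem (φn n) (.assume e') (ψn n)) →
      Deriv tsem asem (φn 0) (.iter C e e') ψlim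
  | false (C φ) : Deriv tsem asem ∅ C φ
  | true (C φ) : Deriv tsem asem φ C Set.univ
  | scale {φ ψ C} (u : U) :
      Deriv tsem asem φ C ψ → Deriv tsem asem (odotL u φ) C (odotL u ψ)
  | disj {φ₁ φ₂ ψ₁ ψ₂ C} :
      Deriv tsem asem φ₁ C ψ₁ → Deriv tsem asem φ₂ C ψ₂ →
      Deriv tsem asem (φ₁ ∪ φ₂) C (ψ₁ ∪ ψ₂)
  | conj {φ₁ φ₂ ψ₁ ψ₂ C} :
      Deriv tsem asem φ₁ C ψ₁ → Deriv tsem asem φ₂ C ψ₂ →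
      Deriv tsem asem (φ₁ ∩ φ₂) C (ψ₁ ∩ ψ₂)
  | choice {T : Type u} {C} (φ φ' : T → OA U St) :
      (∀ t, Deriv tsem asem (φ t) C (φ' t)) →
      Deriv tsem asem (bigOplus φ) C (bigOplus φ')
  | exists_ {T : Type u} {C} (φ φ' : T → OA U St) :
      (∀ t, Deriv tsem asem (φ t) C (φ' t)) →
      Deriv tsem asem (⋃ t, φ t) C (⋃ t, φ' t)
  | conseq {φ φ' ψ ψ' C} :
      φ' ⊆ φ → Deriv tsem asem φ C ψ → ψ ⊆ ψ' →
      Deriv tsem asem φ' C ψ'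

section Aux

variable {U : Type u} [OLSemiring U]

lemma U_zero_le (a : U) : 0 ≤ a := by rw [← OLSemiring.bot_eq_zero (U := U)]; exact bot_le

lemma U_le_add_right (a b : U) : a ≤ a + b :=
  (OLSemiring.le_iff_exists_add a (a + b)).mpr ⟨b, rfl⟩

lemma U_add_le_add {a b c d : U} (h1 : a ≤ b) (h2 : c ≤ d) : a + c ≤ b + d := by
  obtain ⟨x, hx⟩ := (OLSemiring.le_iff_exists_add a b).mp h1
  obtain ⟨y, hy⟩ := (OLSemiring.le_iff_exists_add c d).mp h2
  exact (OLSemiring.le_iff_exists_add _ _).mpr ⟨x + y, by rw [← hx, ← hy, add_add_add_comm]⟩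

lemma U_mul_le_mul_left {a b : U} (c : U) (h : a ≤ b) : c * a ≤ c * b := by
  obtain ⟨x, hx⟩ := (OLSemiring.le_iff_exists_add a b).mp h
  exact (OLSemiring.le_iff_exists_add _ _).mpr ⟨c * x, by rw [← mul_add, hx]⟩

lemma U_mul_le_mul_right {a b : U} (c : U) (h : a ≤ b) : a * c ≤ b * c := by
  obtain ⟨x, hx⟩ := (OLSemiring.le_iff_exists_add a b).mp h
  exact (OLSemiring.le_iff_exists_add _ _).mpr ⟨x * c, by rw [← add_mul, hx]⟩

lemma U_sum_le_sum {I : Type v} {f g : I → U} (A : Finset I) (h : ∀ i ∈ A, f i ≤ g i) :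
    ∑ i ∈ A, f i ≤ ∑ i ∈ A, g i := by
  classical
  induction A using Finset.induction_on with
  | empty => simp
  | insert _ _ hnotmem ih =>
    rw [Finset.sum_insert hnotmem, Finset.sum_insert hnotmem]
    exact U_add_le_add (h _ (Finset.mem_insert_self _ _))
      (ih fun i hi => h i (Finset.mem_insert_of_mem hi))

lemma U_sum_le_sum_subset {I : Type v} {f : I → U} {A B : Finset I} (h : A ⊆ B) :
    ∑ i ∈ A, f i ≤ ∑ i ∈ B, f i := by
  classical
  exact (OLSemiring.le_iff_exists_add _ _).mpr
    ⟨∑ i ∈ B \ A, f i, by rw [add_comm]; exact Finset.sum_sdiff h⟩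

lemma le_wsum {I : Type v} (f : I → U) (J : Finset I) : ∑ i ∈ J, f i ≤ wsum f :=
  le_iSup (fun J : Finset I => ∑ i ∈ J, f i) J

lemma wsum_le {I : Type v} {f : I → U} {u : U} (h : ∀ J : Finset I, ∑ i ∈ J, f i ≤ u) :
    wsum f ≤ u := iSup_le h

lemma wsum_mono {I : Type v} {f g : I → U} (h : ∀ i, f i ≤ g i) : wsum f ≤ wsum g :=
  wsum_le fun J => (U_sum_le_sum J fun i _ => h i).trans (le_wsum g J)

lemma single_le_wsum {I : Type v} (f : I → U) (i : I) : f i ≤ wsum f := by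
  simpa using le_wsum f {i}

lemma wsum_zero {I : Type v} : wsum (fun _ : I => (0 : U)) = 0 :=
  le_antisymm (wsum_le fun J => by simp) (U_zero_le _)

lemma msup_add {κ : Type*} [Nonempty κ] [Preorder κ] [IsDirected κ (· ≤ ·)]
    {F G : κ → U} (hF : Monotone F) (hG : Monotone G) :
    (⨆ k, F k) + (⨆ k, G k) = ⨆ k, (F k + G k) := by
  have key : ∀ (H : κ → U), Monotone H → ∀ y : U, (⨆ k, H k) + y = ⨆ k, (H k + y) := by
    intro H hH y
    have hd : DirectedOn (· ≤ ·) (Set.range H) := directedOn_range.mpr hH.directed_le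
    have h := OLSemiring.add_scott (Set.range H) (Set.range_nonempty H) hd y
    rw [← Set.range_comp] at h
    rw [sSup_range, sSup_range] at h
    exact h.symm
  apply le_antisymm
  · rw [key F hF]
    apply iSup_le; intro k
    rw [add_comm, key G hG]
    apply iSup_le; intro j
    obtain ⟨c, hkc, hjc⟩ := directed_of (· ≤ ·) k j
    refine le_iSup_of_le c ?_
    calc G j + F k ≤ G c + F c := U_add_le_add (hG hjc) (hF hkc)
    _ = F c + G c := add_comm _ _
  · exact iSup_le fun k => U_add_le_add (le_iSup F k) (le_iSup G k)

lemma sum_iSup {I : Type v} {κ : Type*} [Nonempty κ] [Preorder κ] [IsDirected κ (· ≤ ·)]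
    (A : Finset I) (h : I → κ → U) (hm : ∀ i, Monotone (h i)) :
    ∑ i ∈ A, (⨆ k, h i k) = ⨆ k, ∑ i ∈ A, h i k := by
  classical
  induction A using Finset.induction_on with
  | empty => simp
  | insert _ _ hnotmem ih =>
    rw [Finset.sum_insert hnotmem, ih]
    rw [msup_add (hm _) (fun k k' hk => U_sum_le_sum _ fun i _ => hm i hk)]
    exact iSup_congr fun k => by rw [Finset.sum_insert hnotmem]

lemma mul_iSup' {κ : Type*} [Nonempty κ] [Preorder κ] [IsDirected κ (· ≤ ·)]
    {F : κ → U} (hF : Monotone F) (y : U) : y * (⨆ k, F k) = ⨆ k, y * F k := by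
  have hd : DirectedOn (· ≤ ·) (Set.range F) := directedOn_range.mpr hF.directed_le
  have h := OLSemiring.mul_scott_left (Set.range F) (Set.range_nonempty F) hd y
  rw [← Set.range_comp, sSup_range, sSup_range] at h
  exact h.symm

lemma iSup_mul' {κ : Type*} [Nonempty κ] [Preorder κ] [IsDirected κ (· ≤ ·)]
    {F : κ → U} (hF : Monotone F) (y : U) : (⨆ k, F k) * y = ⨆ k, F k * y := by
  have hd : DirectedOn (· ≤ ·) (Set.range F) := directedOn_range.mpr hF.directed_le
  have h := OLSemiring.mul_scott_right (Set.range F) (Set.range_nonempty F) hd y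
  rw [← Set.range_comp, sSup_range, sSup_range] at h
  exact h.symm

lemma sum_monotone {I : Type v} (f : I → U) :
    Monotone (fun J : Finset I => ∑ i ∈ J, f i) :=
  fun _ _ h => U_sum_le_sum_subset h

lemma wsum_mul {I : Type v} (f : I → U) (y : U) :
    wsum f * y = wsum (fun i => f i * y) := by
  unfold wsum
  rw [iSup_mul' (sum_monotone f) y]
  exact iSup_congr fun J => by rw [Finset.sum_mul]

lemma mul_wsum {I : Type v} (f : I → U) (y : U) :
    y * wsum f = wsum (fun i => y * f i) := by
  unfold wsum
  rw [mul_iSup' (sum_monotone f) y]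
  exact iSup_congr fun J => by rw [Finset.mul_sum]

lemma wsum_add {I : Type v} (f g : I → U) :
    wsum (fun i => f i + g i) = wsum f + wsum g := by
  unfold wsum
  rw [msup_add (sum_monotone f) (sum_monotone g)]
  exact iSup_congr fun J => Finset.sum_add_distrib

lemma wsum_iSup {I : Type v} {κ : Type*} [Nonempty κ] [Preorder κ] [IsDirected κ (· ≤ ·)]
    (h : I → κ → U) (hm : ∀ i, Monotone (h i)) :
    wsum (fun i => ⨆ k, h i k) = ⨆ k, wsum (fun i => h i k) := by
  apply le_antisymm
  · apply wsum_le; intro J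
    rw [sum_iSup J h hm]
    exact iSup_mono fun k => le_wsum _ J
  · exact iSup_le fun k => wsum_mono fun i => le_iSup (h i) k

lemma wsum_wsum {I : Type v} {J : Type v} (g : I → J → U) :
    wsum (fun i => wsum (fun j => g i j)) = wsum (fun p : I × J => g p.1 p.2) := by
  apply le_antisymm
  · apply wsum_le; intro A
    have h1 : ∑ i ∈ A, wsum (fun j => g i j)
        = ⨆ B : Finset J, ∑ i ∈ A, ∑ j ∈ B, g i j :=
      sum_iSup A (fun i B => ∑ j ∈ B, g i j) (fun i _ _ hB => U_sum_le_sum_subset hB)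
    rw [h1]
    apply iSup_le; intro B
    rw [← Finset.sum_product' A B (fun i j => g i j)]
    exact le_wsum _ _
  · apply wsum_le; intro P
    have hsub : P ⊆ (P.image Prod.fst) ×ˢ (P.image Prod.snd) := fun p hp =>
      Finset.mem_product.mpr ⟨Finset.mem_image_of_mem _ hp, Finset.mem_image_of_mem _ hp⟩
    calc ∑ p ∈ P, g p.1 p.2 ≤ ∑ p ∈ (P.image Prod.fst) ×ˢ (P.image Prod.snd), g p.1 p.2 :=
          U_sum_le_sum_subset hsub
    _ = ∑ i ∈ P.image Prod.fst, ∑ j ∈ P.image Prod.snd, g i j :=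
          Finset.sum_product' _ _ _
    _ ≤ ∑ i ∈ P.image Prod.fst, wsum (fun j => g i j) :=
          U_sum_le_sum _ fun i _ => le_wsum _ _
    _ ≤ wsum (fun i => wsum (fun j => g i j)) := le_wsum _ _

lemma wsum_equiv {I : Type v} {J : Type v} (e : I ≃ J) (f : J → U) :
    wsum (fun i => f (e i)) = wsum f := by
  apply le_antisymm
  · apply wsum_le; intro A
    have h := Finset.sum_map A e.toEmbedding f
    simp only [Equiv.coe_toEmbedding] at h
    rw [← h]
    exact le_wsum _ _
  · apply wsum_le; intro B
    have h := Finset.sum_map B e.symm.toEmbedding (fun i => f (e i))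
    simp only [Equiv.coe_toEmbedding, Equiv.apply_symm_apply] at h
    rw [← h] at *
    rw [h]
    exact le_wsum _ _

lemma wsum_comm {I : Type v} {J : Type v} (g : I → J → U) :
    wsum (fun i => wsum (fun j => g i j)) = wsum (fun j => wsum (fun i => g i j)) := by
  rw [wsum_wsum, wsum_wsum]
  exact (wsum_equiv (Equiv.prodComm J I) (fun p : I × J => g p.1 p.2)).symm

lemma wsum_single {I : Type v} {f : I → U} (a : I) (h : ∀ i, i ≠ a → f i = 0) :
    wsum f = f a := by
  classical
  apply le_antisymm
  · apply wsum_le; intro J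
    by_cases ha : a ∈ J
    · rw [Finset.sum_eq_single_of_mem a ha (fun b _ hb => h b hb)]
    · rw [Finset.sum_eq_zero (fun b hb => h b (by rintro rfl; exact ha hb))]
      exact U_zero_le _
  · exact single_le_wsum f a

lemma wsum_subtype {I : Type v} {p : I → Prop} {f : I → U} (h : ∀ i, ¬ p i → f i = 0) :
    wsum (fun x : Subtype p => f x.1) = wsum f := by
  classical
  apply le_antisymm
  · apply wsum_le; intro J
    rw [show ∑ x ∈ J, f x.1 = ∑ i ∈ J.map (Function.Embedding.subtype p), f i from
      (Finset.sum_map J (Function.Embedding.subtype p) f).symm]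
    exact le_wsum _ _
  · apply wsum_le; intro J
    have h1 : ∑ i ∈ J, f i = ∑ i ∈ J.filter p, f i :=
      (Finset.sum_filter_of_ne (fun x _ hfx => by_contra fun hp => hfx (h x hp))).symm
    have h2 : ∑ x ∈ J.subtype p, f x.1 = ∑ i ∈ J.filter p, f i :=
      Finset.sum_subtype_eq_sum_filter f
    rw [h1, ← h2]
    exact le_wsum _ _

lemma wsum_nat (f : ℕ → U) : wsum f = ⨆ n, ∑ k ∈ Finset.range n, f k := by
  apply le_antisymm
  · apply wsum_le; intro J
    obtain ⟨n, hn⟩ := J.exists_nat_subset_range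
    exact (U_sum_le_sum_subset hn).trans (le_iSup (fun n => ∑ k ∈ Finset.range n, f k) n)
  · exact iSup_le fun n => le_wsum f (Finset.range n)

end Aux
section Kext

variable {U : Type u} [OLSemiring U]

lemma kext_def {X Y : Type u} (f : X → Y → U) (m : X → U) (y : Y) :
    kext f m y = wsum (fun x => m x * f x y) := by
  have h : ∀ x : X, ¬ x ∈ Function.support m → m x * f x y = 0 := fun x hx => by
    rw [Function.notMem_support.mp hx, zero_mul]
  exact wsum_subtype h

lemma kext_mono {X Y : Type u} {f f' : X → Y → U} (m : X → U) (y : Y)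
    (h : ∀ x, f x y ≤ f' x y) : kext f m y ≤ kext f' m y := by
  rw [kext_def, kext_def]
  exact wsum_mono fun x => U_mul_le_mul_left _ (h x)

lemma kext_kext {X Y Z : Type u} (g2 : Y → Z → U) (g1 : X → Y → U) (m : X → U) :
    kext g2 (kext g1 m) = kext (fun x => kext g2 (g1 x)) m := by
  funext z
  rw [kext_def, kext_def]
  have hL : ∀ y, kext g1 m y * g2 y z = wsum (fun x => (m x * g1 x y) * g2 y z) := by
    intro y; rw [kext_def, wsum_mul]
  have hR : ∀ x, m x * kext g2 (g1 x) z = wsum (fun y => m x * (g1 x y * g2 y z)) := by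
    intro x; rw [kext_def, mul_wsum]
  simp only [hL, hR]
  rw [wsum_comm (fun y x => (m x * g1 x y) * g2 y z)]
  simp only [mul_assoc]

lemma kext_eta {X : Type u} (m : X → U) : kext (fun σ : X => eta σ) m = m := by
  funext y
  rw [kext_def]
  have hz : ∀ x, x ≠ y → m x * eta (U := U) x y = 0 := by
    intro x hx
    have h0 : eta (U := U) x y = 0 := if_neg (fun hh => hx hh.symm)
    rw [h0, mul_zero]
  rw [wsum_single y hz]
  have h1 : eta (U := U) y y = 1 := if_pos rfl
  rw [h1, mul_one]

lemma kext_scalar {X Y : Type u} (f : X → Y → U) (c : U) (h : X → U) (τ : Y) :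
    kext f (fun z => c * h z) τ = c * kext f h τ := by
  rw [kext_def, kext_def, mul_wsum]
  congr 1; funext z; rw [mul_assoc]

lemma kext_Phi {St : Type u} (w w' : St → U) (g f : St → St → U) (m : St → U) (τ : St) :
    kext (Phi w w' g f) m τ
      = kext f (kext (fun σ τ' => w σ * g σ τ') m) τ
        + kext (fun σ τ' => w' σ * eta σ τ') m τ := by
  rw [kext_def]
  have h1 : (fun x => m x * Phi w w' g f x τ)
      = fun x => m x * (w x * kext f (g x) τ) + m x * (w' x * eta x τ) := by
    funext x
    rw [show Phi w w' g f x τ = w x * kext f (g x) τ + w' x * eta x τ from rfl, mul_add]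
  rw [h1, wsum_add]
  congr 1
  · rw [kext_kext, kext_def]
    congr 1; funext x
    exact congrArg (m x * ·) (kext_scalar f (w x) (g x) τ).symm
  · exact (kext_def (fun σ τ' => w' σ * eta σ τ') m τ).symm

lemma kext_iSup {X Y : Type u} {F : ℕ → X → Y → U} (hF : Monotone F) (m : X → U) (y : Y) :
    kext (⨆ n, F n) m y = ⨆ n, kext (F n) m y := by
  rw [kext_def]
  have h1 : ∀ x, m x * (⨆ n, F n) x y = ⨆ n, m x * F n x y := by
    intro x
    have happ : (⨆ n, F n) x y = ⨆ n, F n x y := by rw [iSup_apply, iSup_apply]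
    rw [happ, mul_iSup' (fun n n' h => hF h x y)]
  simp only [h1]
  rw [wsum_iSup (fun x k => m x * F k x y)
    (fun x => fun n n' h => U_mul_le_mul_left _ (hF h x y))]
  exact iSup_congr fun n => (kext_def _ _ _).symm

lemma iterPhi_mono {St : Type u} (w w' : St → U) (g : St → St → U) :
    Monotone (fun n => (Phi w w' g)^[n] (fun _ _ => (0 : U))) := by
  have hmono : ∀ {f f' : St → St → U}, f ≤ f' → Phi w w' g f ≤ Phi w w' g f' := by
    intro f f' hff
    have h : ∀ σ τ, Phi w w' g f σ τ ≤ Phi w w' g f' σ τ := by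
      intro σ τ
      exact U_add_le_add (U_mul_le_mul_left _ (kext_mono _ _ fun x => hff x τ)) le_rfl
    exact h
  apply monotone_nat_of_le_succ
  intro n
  induction n with
  | zero => exact fun σ τ => U_zero_le _
  | succ n ih =>
    rw [Function.iterate_succ_apply', Function.iterate_succ_apply']
    exact hmono ih

end Kext
section Main

variable {U : Type u} [OLSemiring U]

lemma sem_assume_seq {St TI Act : Type u} (tsem : TI → Set St) (asem : Act → St → St → U)
    (e : Expr U TI) (C : Prog U St TI Act) (σ τ : St) :
    sem tsem asem (Prog.seq (.assume e) C) σ τ = eeval tsem e σ * sem tsem asem C σ τ := by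
  simp only [sem]
  rw [kext_def]
  have hz : ∀ x, x ≠ σ → (eeval tsem e σ * eta (U := U) σ x) * sem tsem asem C x τ = 0 := by
    intro x hx
    have h0 : eta (U := U) σ x = 0 := if_neg hx
    rw [h0, mul_zero, zero_mul]
  rw [wsum_single σ hz]
  have h1 : eta (U := U) σ σ = 1 := if_pos rfl
  rw [h1, mul_one]

lemma iter_sound {St TI Act : Type u} (tsem : TI → Set St) (asem : Act → St → St → U)
    (C : Prog U St TI Act) (e e' : Expr U TI)
    (φn ψn : ℕ → OA U St) (ψlim : OA U St) (hconv : convergesTo ψn ψlim)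
    (ihstep : ∀ n, valid tsem asem (φn n) (.seq (.assume e) C) (φn (n + 1)))
    (ihfin : ∀ n, valid tsem asem (φn n) (.assume e') (ψn n)) :
    valid tsem asem (φn 0) (.iter C e e') ψlim := by
  intro m hm
  have hsemA : sem tsem asem (Prog.seq (.assume e) C)
      = fun σ τ => eeval tsem e σ * sem tsem asem C σ τ :=
    funext fun σ => funext fun τ => sem_assume_seq tsem asem e C σ τ
  have hsemE : sem tsem asem (Prog.assume e')
      = fun σ τ => eeval tsem e' σ * eta σ τ := by
    simp only [sem]
  set M : ℕ → St → U :=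
    fun n => (fun mm => kext (fun σ τ => eeval tsem e σ * sem tsem asem C σ τ) mm)^[n] m
    with hMdef
  have hM0 : M 0 = m := rfl
  have hMsucc : ∀ n,
      M (n + 1) = kext (fun σ τ => eeval tsem e σ * sem tsem asem C σ τ) (M n) :=
    fun n => Function.iterate_succ_apply' _ n m
  have hMmem : ∀ n, M n ∈ φn n := by
    intro n
    induction n with
    | zero => exact hm
    | succ n ih =>
      have h2 := ihstep n (M n) ih
      rw [hsemA] at h2
      rw [hMsucc n]
      exact h2
  have hMfin : ∀ n, kext (fun σ τ => eeval tsem e' σ * eta σ τ) (M n) ∈ ψn n := by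
    intro n
    have h2 := ihfin n (M n) (hMmem n)
    rw [hsemE] at h2
    exact h2
  have hF : Monotone (fun n =>
      (Phi (eeval tsem e) (eeval tsem e') (sem tsem asem C))^[n] (fun _ _ => (0 : U))) :=
    iterPhi_mono _ _ _
  have hkey : ∀ n j τ,
      kext ((Phi (eeval tsem e) (eeval tsem e') (sem tsem asem C))^[n] (fun _ _ => 0)) (M j) τ
        = ∑ k ∈ Finset.range n, kext (fun σ τ' => eeval tsem e' σ * eta σ τ') (M (j + k)) τ := by
    intro n
    induction n with
    | zero =>
      intro j τ
      rw [Function.iterate_zero_apply, kext_def]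
      simp only [mul_zero]
      rw [wsum_zero]
      simp
    | succ n ih =>
      intro j τ
      rw [Function.iterate_succ_apply']
      rw [kext_Phi (eeval tsem e) (eeval tsem e') (sem tsem asem C) _ (M j) τ]
      rw [← hMsucc j, ih (j + 1)]
      rw [Finset.sum_range_succ'
        (fun k => kext (fun σ τ' => eeval tsem e' σ * eta σ τ') (M (j + k)) τ) n]
      have harith : ∀ k, j + 1 + k = j + (k + 1) := fun k => by omega
      simp only [harith, Nat.add_zero]
  have hsem : sem tsem asem (Prog.iter C e e')
      = ⨆ n : ℕ, (Phi (eeval tsem e) (eeval tsem e') (sem tsem asem C))^[n] (fun _ _ => 0) := by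
    simp only [sem]
  have hmain : ∀ τ, kext (sem tsem asem (Prog.iter C e e')) m τ
      = wsum (fun n => kext (fun σ τ' => eeval tsem e' σ * eta σ τ') (M n) τ) := by
    intro τ
    rw [hsem, kext_iSup hF m τ]
    have heach : ∀ n,
        kext ((Phi (eeval tsem e) (eeval tsem e') (sem tsem asem C))^[n] (fun _ _ => 0)) m τ
          = ∑ k ∈ Finset.range n, kext (fun σ τ' => eeval tsem e' σ * eta σ τ') (M k) τ := by
      intro n
      have h := hkey n 0 τ
      rw [hM0] at h
      simpa using h
    rw [wsum_nat (fun n => kext (fun σ τ' => eeval tsem e' σ * eta σ τ') (M n) τ)]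
    exact iSup_congr heach
  have hfinal := hconv (fun n => kext (fun σ τ => eeval tsem e' σ * eta σ τ) (M n)) hMfin
  have heq : kext (sem tsem asem (Prog.iter C e e')) m
      = fun τ => wsum (fun n => kext (fun σ τ' => eeval tsem e' σ * eta σ τ') (M n) τ) :=
    funext hmain
  rw [heq]
  exact hfinal

end Main
/-- **Soundness of the Outcome Logic proof system**: every triple derivable from the
oracle `Ω` of valid atomic triples is semantically valid. -/
theorem outcome_logic_soundness {U St TI Act : Type u} [OLSemiring U]
    (tsem : TI → Set St) (asem : Act → St → St → U)
    (C : Prog U St TI Act) (φ ψ : OA U St)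
    (h : Deriv tsem asem φ C ψ) :
    valid tsem asem φ C ψ := by
  induction h with
  | atom a hv => exact hv
  | skip φ =>
    intro m hm
    have hk : kext (sem tsem asem (Prog.skip : Prog U St TI Act)) m = m := by
      simp only [sem]; exact kext_eta m
    rw [hk]; exact hm
  | seq h1 h2 ih1 ih2 =>
    rename_i φ ϑ ψ C₁ C₂
    intro m hm
    have hk : kext (sem tsem asem (Prog.seq C₁ C₂)) m
        = kext (sem tsem asem C₂) (kext (sem tsem asem C₁) m) := by
      simp only [sem]
      exact (kext_kext (sem tsem asem C₂) (sem tsem asem C₁) m).symm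
    rw [hk]
    exact ih2 _ (ih1 m hm)
  | plus h1 h2 ih1 ih2 =>
    rename_i φ ψ₁ ψ₂ C₁ C₂
    intro m hm
    refine ⟨kext (sem tsem asem C₁) m, ih1 m hm, kext (sem tsem asem C₂) m, ih2 m hm, ?_⟩
    funext τ
    simp only [sem]
    rw [kext_def, kext_def, kext_def, ← wsum_add]
    congr 1; funext x; rw [mul_add]
  | assume he =>
    rename_i φ e u
    intro m hm
    refine ⟨m, hm, ?_⟩
    funext τ
    simp only [sem]
    rw [kext_def]
    have hz : ∀ x, x ≠ τ → m x * (eeval tsem e x * eta (U := U) x τ) = 0 := by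
      intro x hx
      have h0 : eta (U := U) x τ = 0 := if_neg (fun hh => hx hh.symm)
      rw [h0, mul_zero, mul_zero]
    rw [wsum_single τ hz]
    have h1 : eta (U := U) τ τ = 1 := if_pos rfl
    rw [h1, mul_one]
    by_cases h0 : m τ = 0
    · rw [h0, zero_mul, zero_mul]
    · rw [he m hm τ h0]
  | iter φn ψn ψlim hconv hstep hfin ihstep ihfin =>
    rename_i C e e'
    exact iter_sound tsem asem C e e' φn ψn ψlim hconv ihstep ihfin
  | false C φ =>
    intro m hm
    exact absurd hm (Set.notMem_empty m)
  | true C φ =>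
    intro m hm
    trivial
  | scale u hd ih =>
    rename_i φ ψ C
    intro m hm
    obtain ⟨m₀, h₀, rfl⟩ := hm
    refine ⟨kext (sem tsem asem C) m₀, ih m₀ h₀, ?_⟩
    funext τ
    rw [kext_def, kext_def, mul_wsum]
    congr 1; funext x; rw [mul_assoc]
  | disj h1 h2 ih1 ih2 =>
    intro m hm
    rcases hm with hm | hm
    · exact Or.inl (ih1 m hm)
    · exact Or.inr (ih2 m hm)
  | conj h1 h2 ih1 ih2 =>
    intro m hm
    exact ⟨ih1 m hm.1, ih2 m hm.2⟩
  | choice φf φf' hd ih =>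
    rename_i T C
    intro m hm
    obtain ⟨fam, hfam, rfl⟩ := hm
    refine ⟨fun t => kext (sem tsem asem C) (fam t), fun t => ih t (fam t) (hfam t), ?_⟩
    funext τ
    rw [kext_def]
    have hbody : (fun x => wsum (fun t => fam t x) * sem tsem asem C x τ)
        = fun x => wsum (fun t => fam t x * sem tsem asem C x τ) := by
      funext x; rw [wsum_mul]
    rw [hbody, wsum_comm (fun x t => fam t x * sem tsem asem C x τ)]
    congr 1; funext t
    exact (kext_def (sem tsem asem C) (fam t) τ).symm
  | exists_ φf φf' hd ih =>
    intro m hm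
    obtain ⟨t, ht⟩ := Set.mem_iUnion.mp hm
    exact Set.mem_iUnion.mpr ⟨t, ih t m ht⟩
  | conseq hs1 hd hs2 ih =>
    intro m hm
    exact hs2 (ih m (hs1 hm))
end

section
/- Subsumption of Hoare Logic (nondeterministic instance): for every function f : Σ → Set Σ and all subsets P, Q ⊆ Σ, the Outcome Logic triple ⟨⌈P⌉⟩f⟨◻Q⟩ is valid — i.e. f†(S) ∈ ◻Q for every S ∈ ⌈P⌉ — if and only if P ⊆ { σ | f(σ) ⊆ Q } (the weakest-liberal-precondition / Dynamic Logic box semantics of the Hoare triple {P} f {Q}). -/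
/-- Kleisli extension in the powerset (nondeterministic) instance: `f†(S) = ⋃_{σ∈S} f σ`. -/
def kextP {St : Type*} (f : St → Set St) (S : Set St) : Set St :=
  ⋃ σ ∈ S, f σ

/-- `⌈P⌉` : the outcome assertion `{S | S nonempty and S ⊆ P}`. -/
def ceil {St : Type*} (P : Set St) : Set (Set St) :=
  { S | S.Nonempty ∧ S ⊆ P }

/-- `◻Q` : the outcome assertion `{S | S ⊆ Q}`. -/
def boxA {St : Type*} (Q : Set St) : Set (Set St) :=
  { S | S ⊆ Q }

/-- `◇Q` : the outcome assertion `{S | S ∩ Q nonempty}`. -/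
def diaA {St : Type*} (Q : Set St) : Set (Set St) :=
  { S | (S ∩ Q).Nonempty }

/-- Semantic validity of an outcome triple in the powerset instance. -/
def validP {St : Type*} (φ : Set (Set St)) (f : St → Set St) (ψ : Set (Set St)) : Prop :=
  ∀ S ∈ φ, kextP f S ∈ ψ

/-- **Subsumption of Hoare Logic (nondeterministic instance)**:
`⊨ ⟨⌈P⌉⟩f⟨◻Q⟩` iff `P ⊆ {σ | f σ ⊆ Q}` (the Dynamic Logic box semantics). -/
theorem ol_subsumes_hoare {St : Type*} (f : St → Set St) (P Q : Set St) :
    validP (ceil P) f (boxA Q) ↔ P ⊆ { σ | f σ ⊆ Q } := by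
  constructor
  · intro h σ hσ
    have := h {σ} ⟨⟨σ, rfl⟩, by simpa using hσ⟩
    simp only [kextP, boxA, Set.mem_setOf_eq, Set.biUnion_singleton] at this ⊢
    exact this
  · intro h S hS x hx
    simp only [kextP, Set.mem_iUnion] at hx
    obtain ⟨σ, hσS, hxf⟩ := hx
    exact h (hS.2 hσS) hxf
end

section
/- Subsumption of Lisbon Logic (nondeterministic instance): for every function f : Σ → Set Σ and all subsets P, Q ⊆ Σ, the Outcome Logic triple ⟨⌈P⌉⟩f⟨◇Q⟩ is valid — i.e. f†(S) ∈ ◇Q for every S ∈ ⌈P⌉ — if and only if P ⊆ { σ | f(σ) ∩ Q is nonempty } (the Dynamic Logic diamond semantics of the Lisbon triple ⟨P⟩ f ⟨Q⟩). -/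
/-- **Subsumption of Lisbon Logic (nondeterministic instance)**:
`⊨ ⟨⌈P⌉⟩f⟨◇Q⟩` iff `P ⊆ {σ | f σ ∩ Q nonempty}` (the Dynamic Logic diamond semantics). -/
theorem ol_subsumes_lisbon {St : Type*} (f : St → Set St) (P Q : Set St) :
    validP (ceil P) f (diaA Q) ↔ P ⊆ { σ | (f σ ∩ Q).Nonempty } := by
  constructor
  · intro h σ hσ
    have := h {σ} ⟨⟨σ, rfl⟩, by simpa using hσ⟩
    simpa [kextP, diaA] using this
  · intro h S hS
    obtain ⟨⟨σ, hσS⟩, hSP⟩ := hS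
    obtain ⟨τ, hτf, hτQ⟩ := h (hSP hσS)
    exact ⟨τ, Set.mem_biUnion hσS hτf, hτQ⟩
end

section
/- Lifting the diamond modality (nondeterministic instance): for every f : Σ → Set Σ and P, Q ⊆ Σ, if the triple ⟨⌈P⌉⟩f⟨◇Q⟩ is valid (f†(S) ∈ ◇Q for every S ∈ ⌈P⌉), then the triple ⟨◇P⟩f⟨◇Q⟩ is valid: for every S : Set Σ with S ∩ P nonempty, (⋃_{σ∈S} f(σ)) ∩ Q is nonempty. -/
/-- **Lifting the diamond modality**: if `⊨ ⟨⌈P⌉⟩f⟨◇Q⟩` then `⊨ ⟨◇P⟩f⟨◇Q⟩`: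
for every `S` with `S ∩ P` nonempty, `(⋃_{σ∈S} f σ) ∩ Q` is nonempty. -/
theorem lift_diamond {St : Type*} (f : St → Set St) (P Q : Set St)
    (h : validP (ceil P) f (diaA Q)) :
    ∀ S : Set St, (S ∩ P).Nonempty → (((⋃ σ ∈ S, f σ)) ∩ Q).Nonempty := by
  rintro S ⟨σ, hσS, hσP⟩
  obtain ⟨y, hyf, hyQ⟩ := h {σ} ⟨⟨σ, rfl⟩, by simpa using hσP⟩
  simp only [kextP, Set.mem_singleton_iff, Set.iUnion_iUnion_eq_left] at hyf
  exact ⟨y, Set.mem_iUnion₂.2 ⟨σ, hσS, hyf⟩, hyQ⟩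
end

section
/- Soundness of the loop-invariant rule (nondeterministic instance): for every guard b ⊆ Σ, body f : Σ → Set Σ and invariant P ⊆ Σ, if f(σ) ⊆ P for every σ ∈ P ∩ b, then for every S ∈ ⌈P⌉ one has wh†(S) ∈ ◻(P ∩ bᶜ), i.e. the triple ⟨⌈P⌉⟩ while b do f ⟨◻(P ∧ ¬b)⟩ is valid. -/
open scoped Classical

def PhiW {St : Type*} (b : Set St) (f : St → Set St) (g : St → Set St) : St → Set St :=
  fun σ => if σ ∈ b then ⋃ τ ∈ f σ, g τ else {σ}

theorem PhiW_mono {St : Type*} (b : Set St) (f : St → Set St) : Monotone (PhiW b f) := by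
  intro g g' h σ
  by_cases hb : σ ∈ b
  · simp only [PhiW, if_pos hb]
    exact Set.iUnion₂_mono fun τ _ => h τ
  · simp [PhiW, hb]

/-- The denotation of `while b do f`: the least fixed point (pointwise `⊆` order)
of `Φ(g)(σ) = ⋃_{τ∈f σ} g τ` if `σ ∈ b`, else `{σ}`. -/
noncomputable def whileSem {St : Type*} (b : Set St) (f : St → Set St) : St → Set St :=
  OrderHom.lfp ⟨PhiW b f, PhiW_mono b f⟩

/-- **Soundness of the loop-invariant rule**: if `f σ ⊆ P` for every `σ ∈ P ∩ b`, then
`⊨ ⟨⌈P⌉⟩ while b do f ⟨◻(P ∧ ¬b)⟩`. -/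
theorem invariant_rule_sound {St : Type*} (b : Set St) (f : St → Set St) (P : Set St)
    (hinv : ∀ σ ∈ P ∩ b, f σ ⊆ P) :
    ∀ S ∈ ceil P, kextP (whileSem b f) S ∈ boxA (P ∩ bᶜ) := by

  intro S hS
  -- Key lemma: whileSem is below g, where g σ = if σ ∈ P then P ∩ bᶜ else univ
  have key : whileSem b f ≤ (fun σ => if σ ∈ P then P ∩ bᶜ else Set.univ) := by
    apply OrderHom.lfp_le
    intro σ
    by_cases hb : σ ∈ b
    · simp only [OrderHom.coe_mk, PhiW, if_pos hb]
      by_cases hP : σ ∈ P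
      · simp only [if_pos hP]
        refine Set.iUnion₂_subset fun τ hτ => ?_
        have hτP : τ ∈ P := hinv σ ⟨hP, hb⟩ hτ
        simp [if_pos hτP]
      · simp [if_neg hP]
    · simp only [OrderHom.coe_mk, PhiW, if_neg hb]
      by_cases hP : σ ∈ P
      · simp only [if_pos hP]
        intro x hx
        rcases hx with rfl
        exact ⟨hP, hb⟩
      · simp [if_neg hP]
  intro x hx
  rcases Set.mem_iUnion₂.mp hx with ⟨σ, hσ, hxσ⟩
  have hσP : σ ∈ P := hS.2 hσ
  have := key σ hxσ
  simpa [if_pos hσP] using this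
end

section
/- Soundness of the loop-variant rule (nondeterministic instance): let b ⊆ Σ, f : Σ → Set Σ, and let (φ_n)_{n∈ℕ} be a family of outcome assertions (sets of subsets of Σ) such that every S ∈ φ₀ satisfies S ⊆ bᶜ, every S ∈ φ_{n+1} satisfies S ⊆ b, and for every n and every S ∈ φ_{n+1}, f†(S) ∈ φ_n. Then for every n and every S ∈ φ_n, wh†(S) ∈ φ₀, i.e. the triple ⟨∃n:ℕ. φ_n⟩ while b do f ⟨φ₀⟩ is valid. -/
open scoped Classical

/-- **Soundness of the loop-variant rule**: given a family `(φ n)` of outcome assertions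
with `S ⊆ bᶜ` for `S ∈ φ 0`, `S ⊆ b` for `S ∈ φ (n+1)`, and `f†(S) ∈ φ n` for every
`S ∈ φ (n+1)`, the triple `⟨∃n. φ n⟩ while b do f ⟨φ 0⟩` is valid. -/
theorem variant_rule_sound {St : Type*} (b : Set St) (f : St → Set St)
    (φ : ℕ → Set (Set St))
    (h0 : ∀ S ∈ φ 0, S ⊆ bᶜ)
    (hS : ∀ n, ∀ S ∈ φ (n + 1), S ⊆ b)
    (hstep : ∀ n, ∀ S ∈ φ (n + 1), kextP f S ∈ φ n) :
    ∀ n, ∀ S ∈ φ n, kextP (whileSem b f) S ∈ φ 0 := by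
  have hfix : ∀ σ, whileSem b f σ = PhiW b f (whileSem b f) σ := by
    intro σ
    have := OrderHom.map_lfp (⟨PhiW b f, PhiW_mono b f⟩ : (St → Set St) →o (St → Set St))
    exact (congrFun this σ).symm
  intro n
  induction n with
  | zero =>
    intro S hS0
    have : kextP (whileSem b f) S = S := by
      ext x
      simp only [kextP, Set.mem_iUnion]
      constructor
      · rintro ⟨σ, hσ, hx⟩
        rw [hfix σ] at hx
        simp only [PhiW, if_neg (h0 S hS0 hσ)] at hx
        simpa using hx ▸ hσ
      · intro hx
        refine ⟨x, hx, ?_⟩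
        rw [hfix x]
        simp [PhiW, if_neg (h0 S hS0 hx)]
    rwa [this]
  | succ n ih =>
    intro S hSn
    have key : kextP (whileSem b f) S = kextP (whileSem b f) (kextP f S) := by
      ext x
      simp only [kextP, Set.mem_iUnion]
      constructor
      · rintro ⟨σ, hσ, hx⟩
        rw [hfix σ] at hx
        simp only [PhiW, if_pos (hS n S hSn hσ), Set.mem_iUnion] at hx
        obtain ⟨τ, hτ, hx⟩ := hx
        exact ⟨τ, ⟨σ, hσ, hτ⟩, hx⟩
      · rintro ⟨τ, ⟨σ, hσ, hτ⟩, hx⟩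
        refine ⟨σ, hσ, ?_⟩
        rw [hfix σ]
        simp only [PhiW, if_pos (hS n S hSn hσ), Set.mem_iUnion]
        exact ⟨τ, hτ, hx⟩
    rw [key]
    exact ih _ (hstep n S hSn)
end

section
/- Soundness of the Lisbon loop-variant rule (nondeterministic instance): let b ⊆ Σ, f : Σ → Set Σ, and let (P_n)_{n∈ℕ} be subsets of Σ with P₀ ⊆ bᶜ, P_{n+1} ⊆ b for all n, and such that for every n and every σ ∈ P_{n+1}, f(σ) ∩ P_n is nonempty. Then for every n and every nonempty S ⊆ P_n, (⋃_{σ∈S} wh(σ)) ∩ P₀ is nonempty, i.e. the triple ⟨∃n:ℕ. ⌈P_n⌉⟩ while b do f ⟨◇P₀⟩ is valid. -/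
open scoped Classical

theorem whileSem_eq {St : Type*} (b : Set St) (f : St → Set St) :
    whileSem b f = PhiW b f (whileSem b f) :=
  (OrderHom.map_lfp ⟨PhiW b f, PhiW_mono b f⟩).symm

/-- **Soundness of the Lisbon loop-variant rule**: given subsets `(P n)` of `Σ` with
`P 0 ⊆ bᶜ`, `P (n+1) ⊆ b`, and `f σ ∩ P n` nonempty for every `σ ∈ P (n+1)`, the triple
`⟨∃n. ⌈P n⌉⟩ while b do f ⟨◇(P 0)⟩` is valid. -/
theorem lisbon_variant_rule_sound {St : Type*} (b : Set St) (f : St → Set St)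
    (P : ℕ → Set St)
    (h0 : P 0 ⊆ bᶜ)
    (hS : ∀ n, P (n + 1) ⊆ b)
    (hstep : ∀ n, ∀ σ ∈ P (n + 1), (f σ ∩ P n).Nonempty) :
    ∀ n, ∀ S : Set St, S.Nonempty → S ⊆ P n →
      ((⋃ σ ∈ S, whileSem b f σ) ∩ P 0).Nonempty := by
  have key : ∀ n, ∀ σ ∈ P n, (whileSem b f σ ∩ P 0).Nonempty := by
    intro n
    induction n with
    | zero =>
      intro σ hσ
      have hb : σ ∉ b := h0 hσ
      have : whileSem b f σ = {σ} := by
        conv_lhs => rw [whileSem_eq]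
        simp [PhiW, hb]
      rw [this]
      exact ⟨σ, rfl, hσ⟩
    | succ n ih =>
      intro σ hσ
      obtain ⟨τ, hτf, hτP⟩ := hstep n σ hσ
      obtain ⟨x, hx, hxP⟩ := ih τ hτP
      have hsub : whileSem b f τ ⊆ whileSem b f σ := by
        conv_rhs => rw [whileSem_eq]
        simp only [PhiW, if_pos (hS n hσ)]
        exact Set.subset_biUnion_of_mem hτf
      exact ⟨x, hsub hx, hxP⟩
  intro n S ⟨σ, hσ⟩ hSP
  obtain ⟨x, hx, hxP⟩ := key n σ (hSP hσ)
  exact ⟨x, Set.mem_biUnion hσ hx, hxP⟩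
end

section
/- Soundness of the While rule (nondeterministic instance): let b ⊆ Σ, f : Σ → Set Σ, and let (φ_n)_{n∈ℕ}, (ψ_n)_{n∈ℕ} and ψ_∞ be outcome assertions (sets of subsets of Σ) such that (i) for every sequence (m_n)_{n∈ℕ} of subsets of Σ with m_n ∈ ψ_n for all n, one has ⋃_{n∈ℕ} m_n ∈ ψ_∞ (the family (ψ_n) converges to ψ_∞); (ii) every S ∈ φ_n satisfies S ⊆ b and every S ∈ ψ_n satisfies S ⊆ bᶜ; and (iii) for every n and S ∈ φ_n, f†(S) ∈ φ_{n+1} ⊕ ψ_{n+1}. Then for every S ∈ φ₀ ⊕ ψ₀, wh†(S) ∈ ψ_∞. -/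
open scoped Classical

/-- Binary outcome conjunction in the powerset instance: `φ ⊕ ψ = {S₁ ∪ S₂ | S₁∈φ, S₂∈ψ}`. -/
def oplusP {St : Type*} (φ ψ : Set (Set St)) : Set (Set St) :=
  { S | ∃ S₁ ∈ φ, ∃ S₂ ∈ ψ, S = S₁ ∪ S₂ }

/-- **Soundness of the While rule (nondeterministic instance)**: if `(ψ n)` converges to
`ψlim`, each `S ∈ φ n` satisfies `S ⊆ b`, each `S ∈ ψ n` satisfies `S ⊆ bᶜ`, and
`f†(S) ∈ φ (n+1) ⊕ ψ (n+1)` for every `S ∈ φ n`, then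
`wh†(S) ∈ ψlim` for every `S ∈ φ 0 ⊕ ψ 0`. -/
theorem while_rule_sound {St : Type*} (b : Set St) (f : St → Set St)
    (φ ψ : ℕ → Set (Set St)) (ψlim : Set (Set St))
    (hconv : ∀ ms : ℕ → Set St, (∀ n, ms n ∈ ψ n) → (⋃ n, ms n) ∈ ψlim)
    (hφ : ∀ n, ∀ S ∈ φ n, S ⊆ b)
    (hψ : ∀ n, ∀ S ∈ ψ n, S ⊆ bᶜ)
    (hstep : ∀ n, ∀ S ∈ φ n, kextP f S ∈ oplusP (φ (n + 1)) (ψ (n + 1))) :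
    ∀ S ∈ oplusP (φ 0) (ψ 0), kextP (whileSem b f) S ∈ ψlim := by
  intro S hS
  obtain ⟨S₁, hS₁, S₂, hS₂, rfl⟩ := hS
  set wh := whileSem b f with hwhdef
  have hfix : PhiW b f wh = wh := OrderHom.map_lfp ⟨PhiW b f, PhiW_mono b f⟩
  have whn : ∀ σ, σ ∉ b → wh σ = {σ} := by
    intro σ h; rw [← hfix]; simp [PhiW, h]
  have whi : ∀ σ, σ ∈ b → wh σ = ⋃ τ ∈ f σ, wh τ := by
    intro σ h
    conv_lhs => rw [← hfix]
    simp [PhiW, h]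
  have kun : ∀ (g : St → Set St) (A B : Set St),
      kextP g (A ∪ B) = kextP g A ∪ kextP g B := by
    intro g A B; simp only [kextP]; exact Set.biUnion_union A B g
  have kid : ∀ B : Set St, B ⊆ bᶜ → kextP wh B = B := by
    intro B hB
    ext x; simp only [kextP, Set.mem_iUnion, exists_prop]
    constructor
    · rintro ⟨σ, hσ, hx⟩
      rw [whn σ (hB hσ)] at hx
      rw [Set.mem_singleton_iff] at hx
      subst hx; exact hσ
    · intro hx; exact ⟨x, hx, by rw [whn x (hB hx)]; rfl⟩
  have kstep : ∀ A : Set St, A ⊆ b → kextP wh A = kextP wh (kextP f A) := by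
    intro A hA
    ext x; simp only [kextP, Set.mem_iUnion, exists_prop]
    constructor
    · rintro ⟨σ, hσ, hx⟩
      rw [whi σ (hA hσ)] at hx
      simp only [Set.mem_iUnion, exists_prop] at hx
      obtain ⟨τ, hτ, hx⟩ := hx
      exact ⟨τ, ⟨σ, hσ, hτ⟩, hx⟩
    · rintro ⟨τ, ⟨σ, hσ, hτ⟩, hx⟩
      refine ⟨σ, hσ, ?_⟩
      rw [whi σ (hA hσ)]
      simp only [Set.mem_iUnion, exists_prop]
      exact ⟨τ, hτ, hx⟩
  -- build the sequences T n ∈ φ n, m n ∈ ψ n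
  have hnext : ∀ n (T : Set St), T ∈ φ n →
      ∃ p : Set St × Set St, p.1 ∈ φ (n+1) ∧ p.2 ∈ ψ (n+1) ∧ kextP f T = p.1 ∪ p.2 := by
    intro n T hT
    obtain ⟨A, hA, B, hB, hE⟩ := hstep n T hT
    exact ⟨(A, B), hA, hB, hE⟩
  choose nxt h1 h2 h3 using hnext
  obtain ⟨T, m, hT0, hm0, hTmem, hmmem, heq⟩ :
      ∃ T m : ℕ → Set St, T 0 = S₁ ∧ m 0 = S₂ ∧ (∀ n, T n ∈ φ n) ∧ (∀ n, m n ∈ ψ n) ∧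
        ∀ n, kextP f (T n) = T (n+1) ∪ m (n+1) := by
    let g : ∀ n : ℕ, {p : Set St × Set St // p.1 ∈ φ n ∧ p.2 ∈ ψ n} :=
      fun n => Nat.rec ⟨(S₁, S₂), hS₁, hS₂⟩
        (fun k ih => ⟨nxt k ih.1.1 ih.2.1, h1 k _ ih.2.1, h2 k _ ih.2.1⟩) n
    refine ⟨fun n => (g n).1.1, fun n => (g n).1.2, rfl, rfl, fun n => (g n).2.1,
      fun n => (g n).2.2, fun n => ?_⟩
    exact h3 n _ (g n).2.1
  -- key equation
  have eqn : ∀ n, kextP wh (T n) = kextP wh (T (n+1)) ∪ m (n+1) := by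
    intro n
    rw [kstep (T n) (hφ n _ (hTmem n)), heq n, kun,
      kid (m (n+1)) (hψ (n+1) _ (hmmem (n+1)))]
  have hmono : ∀ n, kextP wh (T n) ⊆ kextP wh (T 0) := by
    intro n
    induction n with
    | zero => exact subset_rfl
    | succ k ih =>
      refine subset_trans ?_ ih
      rw [eqn k]; exact Set.subset_union_left
  -- the approximants
  set W : ℕ → St → Set St := fun k => (PhiW b f)^[k] (fun _ => ∅) with hWdef
  have hW0 : ∀ σ, W 0 σ = ∅ := fun σ => rfl
  have hWs : ∀ k, W (k+1) = PhiW b f (W k) := by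
    intro k; simp only [hWdef, Function.iterate_succ_apply']
  have hWc : ∀ k σ, σ ∉ b → W k σ ⊆ {σ} := by
    intro k σ h
    cases k with
    | zero => intro x hx; exact absurd hx (by simp [hW0])
    | succ k => rw [hWs]; simp [PhiW, h]
  have hwhW : ∀ σ, wh σ ⊆ ⋃ k, W k σ := by
    have : wh ≤ fun σ => ⋃ k, W k σ := by
      apply OrderHom.lfp_le
      intro σ
      show PhiW b f (fun σ => ⋃ k, W k σ) σ ⊆ ⋃ k, W k σ
      by_cases h : σ ∈ b
      · simp only [PhiW, if_pos h]
        intro x hx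
        simp only [Set.mem_iUnion, exists_prop] at hx ⊢
        obtain ⟨τ, hτ, k, hx⟩ := hx
        refine ⟨k + 1, ?_⟩
        rw [hWs]
        simp only [PhiW, if_pos h, Set.mem_iUnion, exists_prop]
        exact ⟨τ, hτ, hx⟩
      · simp only [PhiW, if_neg h]
        intro x hx
        simp only [Set.mem_iUnion]
        refine ⟨1, ?_⟩
        rw [hWs]
        simpa [PhiW, h, hW0] using hx
    exact this
  have hmain : ∀ k n, kextP (W k) (T n) ⊆ ⋃ j, m j := by
    intro k
    induction k with
    | zero =>
      intro n x hx
      simp only [kextP, Set.mem_iUnion, exists_prop] at hx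
      obtain ⟨σ, _, hx⟩ := hx
      exact absurd hx (by simp [hW0])
    | succ k ih =>
      intro n x hx
      simp only [kextP, Set.mem_iUnion, exists_prop] at hx
      obtain ⟨σ, hσ, hx⟩ := hx
      have hσb : σ ∈ b := hφ n _ (hTmem n) hσ
      rw [hWs] at hx
      simp only [PhiW, if_pos hσb, Set.mem_iUnion, exists_prop] at hx
      obtain ⟨τ, hτ, hx⟩ := hx
      have hτmem : τ ∈ T (n+1) ∪ m (n+1) := by
        rw [← heq n]
        simp only [kextP, Set.mem_iUnion, exists_prop]
        exact ⟨σ, hσ, hτ⟩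
      rcases hτmem with hτT | hτm
      · exact ih (n+1) (by simp only [kextP, Set.mem_iUnion, exists_prop]; exact ⟨τ, hτT, hx⟩)
      · have : x ∈ ({τ} : Set St) := hWc k τ (hψ (n+1) _ (hmmem (n+1)) hτm) hx
        rw [Set.mem_singleton_iff] at this
        subst this
        exact Set.mem_iUnion.mpr ⟨n+1, hτm⟩
  -- the main equality
  have hkey : kextP wh (S₁ ∪ S₂) = ⋃ n, m n := by
    apply Set.Subset.antisymm
    · rw [kun, ← hT0, ← hm0, kid (m 0) (hψ 0 _ (hmmem 0))]
      apply Set.union_subset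
      · intro x hx
        simp only [kextP, Set.mem_iUnion, exists_prop] at hx
        obtain ⟨σ, hσ, hx⟩ := hx
        obtain ⟨k, hk⟩ := Set.mem_iUnion.mp (hwhW σ hx)
        exact hmain k 0 (by simp only [kextP, Set.mem_iUnion, exists_prop]; exact ⟨σ, hσ, hk⟩)
      · intro x hx; exact Set.mem_iUnion.mpr ⟨0, hx⟩
    · apply Set.iUnion_subset
      intro n
      rw [kun, ← hT0, ← hm0, kid (m 0) (hψ 0 _ (hmmem 0))]
      cases n with
      | zero => exact Set.subset_union_right
      | succ k =>
        refine subset_trans ?_ (subset_trans (hmono k) Set.subset_union_left)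
        rw [eqn k]; exact Set.subset_union_right
  rw [hkey]
  exact hconv m hmmem
end
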